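/- The dimension of the conjugation orbit (adjoint orbit) of a nilpotent matrix e in gl_n(C) with Jordan partition [d_1,...,d_N] equals n² − Σ_{i,j} min(d_i, d_j); in particular this number is even. -/

import Mathlib

open scoped Matrix

/-- The nilpotent matrix in Jordan normal form with blocks of sizes `d i`. -/
noncomputable def jordanMatrix {N : ℕ} (d : Fin N → ℕ) :
    Matrix (Σ i : Fin N, Fin (d i)) (Σ i : Fin N, Fin (d i)) ℂ :=
  fun p q =>
    if _h : p.1 = q.1 then (if (q.2 : ℕ) = (p.2 : ℕ) + 1 then 1 else 0) else 0

namespace JordanAux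

variable {N : ℕ} {d : Fin N → ℕ}

abbrev Idx (d : Fin N → ℕ) := Σ i : Fin N, Fin (d i)
abbrev Mat (d : Fin N → ℕ) := Matrix (Idx d) (Idx d) ℂ

lemma left_apply (X : Mat d) (i : Fin N) (p : Fin (d i)) (j : Fin N) (q : Fin (d j)) :
    (jordanMatrix d * X) ⟨i, p⟩ ⟨j, q⟩ =
      if h : (p : ℕ) + 1 < d i then X ⟨i, ⟨p + 1, h⟩⟩ ⟨j, q⟩ else 0 := by
  rw [Matrix.mul_apply]
  split_ifs with h
  · rw [Finset.sum_eq_single (⟨i, ⟨p + 1, h⟩⟩ : Idx d)]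
    · simp [jordanMatrix]
    · rintro ⟨l, r⟩ - hb
      rcases eq_or_ne i l with rfl | hl
      · have hr : (r : ℕ) ≠ (p : ℕ) + 1 := by
          intro hr
          exact hb (by simp [Sigma.ext_iff, Fin.ext_iff, hr])
        simp [jordanMatrix, hr]
      · simp [jordanMatrix, hl]
    · simp
  · refine Finset.sum_eq_zero ?_
    rintro ⟨l, r⟩ -
    rcases eq_or_ne i l with rfl | hl
    · have hr : (r : ℕ) ≠ (p : ℕ) + 1 := by omega
      simp [jordanMatrix, hr]
    · simp [jordanMatrix, hl]

lemma right_apply (X : Mat d) (i : Fin N) (p : Fin (d i)) (j : Fin N) (q : Fin (d j)) :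
    (X * jordanMatrix d) ⟨i, p⟩ ⟨j, q⟩ =
      if 0 < (q : ℕ) then X ⟨i, p⟩ ⟨j, ⟨(q : ℕ) - 1, by omega⟩⟩ else 0 := by
  rw [Matrix.mul_apply]
  split_ifs with h
  · rw [Finset.sum_eq_single (⟨j, ⟨(q : ℕ) - 1, by omega⟩⟩ : Idx d)]
    · have h1 : jordanMatrix d ⟨j, ⟨(q : ℕ) - 1, by omega⟩⟩ ⟨j, q⟩ = 1 := by
        simp only [jordanMatrix]
        rw [dif_pos trivial, if_pos (by omega)]
      rw [h1, mul_one]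
    · rintro ⟨l, r⟩ - hb
      rcases eq_or_ne l j with rfl | hl
      · have hr : (q : ℕ) ≠ (r : ℕ) + 1 := by
          intro hr
          exact hb (by simp [Sigma.ext_iff, Fin.ext_iff]; omega)
        simp [jordanMatrix, hr]
      · simp [jordanMatrix, hl]
    · simp
  · refine Finset.sum_eq_zero ?_
    rintro ⟨l, r⟩ -
    rcases eq_or_ne l j with rfl | hl
    · have hr : (q : ℕ) ≠ (r : ℕ) + 1 := by omega
      simp [jordanMatrix, hr]
    · simp [jordanMatrix, hl]


abbrev Par (d : Fin N → ℕ) := Π i : Fin N, Π j : Fin N, Fin (min (d i) (d j)) → ℂ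

noncomputable def psiFun (d : Fin N → ℕ) (c : Par d) : Mat d := fun p q =>
  if h : (p.2 : ℕ) + d q.1 - (q.2 : ℕ) - 1 < min (d p.1) (d q.1) then
    c p.1 q.1 ⟨(p.2 : ℕ) + d q.1 - (q.2 : ℕ) - 1, h⟩ else 0

lemma psiFun_apply (c : Par d) (i : Fin N) (p : Fin (d i)) (j : Fin N) (q : Fin (d j)) :
    psiFun d c ⟨i, p⟩ ⟨j, q⟩ =
      if h : (p : ℕ) + d j - (q : ℕ) - 1 < min (d i) (d j) then
        c i j ⟨(p : ℕ) + d j - (q : ℕ) - 1, h⟩ else 0 := rfl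

lemma psiFun_comm (c : Par d) :
    jordanMatrix d * psiFun d c = psiFun d c * jordanMatrix d := by
  ext ⟨i, p⟩ ⟨j, q⟩
  rw [left_apply, right_apply]
  have hp : (p : ℕ) < d i := p.isLt
  have hq : (q : ℕ) < d j := q.isLt
  split_ifs with h1 h2 h2
  · rw [psiFun_apply, psiFun_apply]
    simp only [Fin.val_mk]
    split_ifs with h3 h4 h4
    · congr 1
      apply Fin.ext
      simp only [Fin.val_mk]
      omega
    · omega
    · omega
    · rfl
  · rw [psiFun_apply]
    simp only [Fin.val_mk]
    rw [dif_neg (by omega)]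
  · rw [psiFun_apply]
    simp only [Fin.val_mk]
    rw [dif_neg (by omega)]
  · rfl

lemma psiFun_inj (c : Par d) (hc : psiFun d c = 0) : c = 0 := by
  funext i j k
  have hk := k.isLt
  have hb : (0 : ℕ) < d i := by omega
  have hq : d j - 1 - (k : ℕ) < d j := by omega
  have h0 := congrFun (congrFun hc ⟨i, ⟨0, hb⟩⟩) ⟨j, ⟨d j - 1 - (k : ℕ), hq⟩⟩
  rw [psiFun_apply] at h0
  simp only [Fin.val_mk, Matrix.zero_apply] at h0
  rw [dif_pos (by omega : (0 : ℕ) + d j - (d j - 1 - (k : ℕ)) - 1 < min (d i) (d j))] at h0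
  have hkk : c i j k = c i j ⟨(0 : ℕ) + d j - (d j - 1 - (k : ℕ)) - 1, by omega⟩ := by
    congr 1
    apply Fin.ext
    simp only [Fin.val_mk]
    omega
  rw [hkk, h0]
  simp


lemma relR (X : Mat d) (hX : jordanMatrix d * X = X * jordanMatrix d)
    (i : Fin N) (p : Fin (d i)) (j : Fin N) (q : Fin (d j)) :
    (if h : (p : ℕ) + 1 < d i then X ⟨i, ⟨(p : ℕ) + 1, h⟩⟩ ⟨j, q⟩ else 0) =
      (if 0 < (q : ℕ) then X ⟨i, p⟩ ⟨j, ⟨(q : ℕ) - 1, by omega⟩⟩ else 0) := by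
  rw [← left_apply, ← right_apply, hX]

lemma step (X : Mat d) (hX : jordanMatrix d * X = X * jordanMatrix d)
    (i j : Fin N) (p p' : Fin (d i)) (q q' : Fin (d j))
    (hp : (p' : ℕ) = (p : ℕ) + 1) (hq : (q' : ℕ) = (q : ℕ) + 1) :
    X ⟨i, p⟩ ⟨j, q⟩ = X ⟨i, p'⟩ ⟨j, q'⟩ := by
  have h := relR X hX i p j q'
  rw [dif_pos (by omega : (p : ℕ) + 1 < d i), if_pos (by omega : 0 < (q' : ℕ))] at h
  have e1 : (⟨(p : ℕ) + 1, by omega⟩ : Fin (d i)) = p' := Fin.ext (by simp [hp])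
  have e2 : (⟨(q' : ℕ) - 1, by omega⟩ : Fin (d j)) = q := Fin.ext (by simp; omega)
  rw [e1, e2] at h
  exact h.symm

lemma shift (X : Mat d) (hX : jordanMatrix d * X = X * jordanMatrix d)
    (m p q : ℕ) (i j : Fin N) (hp : p + m < d i) (hq : q + m < d j) :
    X ⟨i, ⟨p, by omega⟩⟩ ⟨j, ⟨q, by omega⟩⟩ = X ⟨i, ⟨p + m, hp⟩⟩ ⟨j, ⟨q + m, hq⟩⟩ := by
  induction m with
  | zero => congr 2
  | succ m ih =>
      have hp' : p + m < d i := by omega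
      have hq' : q + m < d j := by omega
      rw [ih hp' hq']
      exact step X hX i j ⟨p + m, hp'⟩ ⟨p + (m + 1), hp⟩ ⟨q + m, hq'⟩ ⟨q + (m + 1), hq⟩
        (by simp; omega) (by simp; omega)

lemma shift' (X : Mat d) (hX : jordanMatrix d * X = X * jordanMatrix d)
    (i j : Fin N) (p q p' q' : ℕ)
    (hp : p < d i) (hq : q < d j) (hp' : p' < d i) (hq' : q' < d j)
    (hd : p + q' = p' + q) (hord : p ≤ p') :
    X ⟨i, ⟨p, hp⟩⟩ ⟨j, ⟨q, hq⟩⟩ = X ⟨i, ⟨p', hp'⟩⟩ ⟨j, ⟨q', hq'⟩⟩ := by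
  obtain ⟨m, rfl⟩ : ∃ m, p' = p + m := ⟨p' - p, by omega⟩
  obtain rfl : q' = q + m := by omega
  exact shift X hX m p q i j hp' hq'

lemma lastrow (X : Mat d) (hX : jordanMatrix d * X = X * jordanMatrix d)
    (i j : Fin N) (p : ℕ) (q : ℕ) (hpl : p + 1 = d i) (hql : q + 2 ≤ d j) :
    X ⟨i, ⟨p, by omega⟩⟩ ⟨j, ⟨q, by omega⟩⟩ = 0 := by
  have h := relR X hX i ⟨p, by omega⟩ j ⟨q + 1, by omega⟩
  simp only [Fin.val_mk] at h
  rw [dif_neg (by omega), if_pos (by omega)] at h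
  exact h.symm

lemma firstcol (X : Mat d) (hX : jordanMatrix d * X = X * jordanMatrix d)
    (i j : Fin N) (p : ℕ) (hp : p + 1 < d i) (h0 : 0 < d j) :
    X ⟨i, ⟨p + 1, hp⟩⟩ ⟨j, ⟨0, h0⟩⟩ = 0 := by
  have h := relR X hX i ⟨p, by omega⟩ j ⟨0, h0⟩
  simp only [Fin.val_mk] at h
  rw [dif_pos (by omega), if_neg (by omega)] at h
  exact h

lemma negA (X : Mat d) (hX : jordanMatrix d * X = X * jordanMatrix d)
    (i j : Fin N) (p : Fin (d i)) (q : Fin (d j))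
    (hp : (p : ℕ) < d i) (hq : (q : ℕ) < d j)
    (hk : d i ≤ (p : ℕ) + d j - (q : ℕ) - 1) : (0 : ℂ) = X ⟨i, p⟩ ⟨j, q⟩ := by
  rcases le_or_gt (p : ℕ) (q : ℕ) with hpq | hpq
  · have h1 : X ⟨i, p⟩ ⟨j, q⟩ =
        X ⟨i, ⟨d i - 1, by omega⟩⟩ ⟨j, ⟨(q : ℕ) + (d i - 1 - (p : ℕ)), by omega⟩⟩ :=
      shift' X hX i j (p : ℕ) (q : ℕ) _ _ p.isLt q.isLt (by omega) (by omega)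
        (by omega) (by omega)
    have h2 := lastrow X hX i j (d i - 1) ((q : ℕ) + (d i - 1 - (p : ℕ)))
      (by omega) (by omega)
    exact (h1.trans h2).symm
  · obtain ⟨m, hm⟩ : ∃ m, (p : ℕ) - (q : ℕ) = m + 1 := ⟨(p : ℕ) - (q : ℕ) - 1, by omega⟩
    have h1 : X ⟨i, ⟨m + 1, by omega⟩⟩ ⟨j, ⟨0, by omega⟩⟩ = X ⟨i, p⟩ ⟨j, q⟩ :=
      shift' X hX i j (m + 1) 0 (p : ℕ) (q : ℕ) (by omega) (by omega)
        p.isLt q.isLt (by omega) (by omega)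
    have h2 := firstcol X hX i j m (by omega) (by omega)
    exact (h2.symm.trans h1)

lemma negB (X : Mat d) (hX : jordanMatrix d * X = X * jordanMatrix d)
    (i j : Fin N) (p : Fin (d i)) (q : Fin (d j))
    (hp : (p : ℕ) < d i) (hq : (q : ℕ) < d j)
    (hk : d j ≤ (p : ℕ) + d j - (q : ℕ) - 1) : (0 : ℂ) = X ⟨i, p⟩ ⟨j, q⟩ := by
  have hpq : (q : ℕ) < (p : ℕ) := by omega
  obtain ⟨m, hm⟩ : ∃ m, (p : ℕ) - (q : ℕ) = m + 1 := ⟨(p : ℕ) - (q : ℕ) - 1, by omega⟩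
  have h1 : X ⟨i, ⟨m + 1, by omega⟩⟩ ⟨j, ⟨0, by omega⟩⟩ = X ⟨i, p⟩ ⟨j, q⟩ :=
    shift' X hX i j (m + 1) 0 (p : ℕ) (q : ℕ) (by omega) (by omega)
      p.isLt q.isLt (by omega) (by omega)
  have h2 := firstcol X hX i j m (by omega) (by omega)
  exact (h2.symm.trans h1)

lemma psiFun_surj (X : Mat d) (hX : jordanMatrix d * X = X * jordanMatrix d) :
    ∃ c : Par d, psiFun d c = X := by
  refine ⟨fun i j k => X ⟨i, ⟨0, by have := k.isLt; omega⟩⟩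
      ⟨j, ⟨d j - 1 - (k : ℕ), by have := k.isLt; omega⟩⟩, ?_⟩
  ext ⟨i, p⟩ ⟨j, q⟩
  have hp : (p : ℕ) < d i := p.isLt
  have hq : (q : ℕ) < d j := q.isLt
  rw [psiFun_apply]
  split_ifs with h
  · have hdi : (p : ℕ) + d j - (q : ℕ) - 1 < d i := lt_of_lt_of_le h inf_le_left
    have hdj : (p : ℕ) + d j - (q : ℕ) - 1 < d j := lt_of_lt_of_le h inf_le_right
    exact shift' X hX i j _ _ _ _ (by omega) (by simp only [Fin.val_mk]; omega)
      p.isLt q.isLt (by simp only [Fin.val_mk]; omega) (by omega)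
  · have hmin : d i ⊓ d j ≤ (p : ℕ) + d j - (q : ℕ) - 1 := le_of_not_gt h
    rcases min_choice (d i) (d j) with hc | hc <;> rw [hc] at hmin <;>
      rcases le_or_gt (p : ℕ) (q : ℕ) with hpq | hpq <;>
      [skip; skip; skip; skip]
    case _ => exact negA X hX i j p q hp hq (by omega)
    case _ => exact negB X hX i j p q hp hq (by omega)
    case _ => exact negA X hX i j p q hp hq (by omega)
    case _ => exact negB X hX i j p q hp hq (by omega)

noncomputable def psi : Par d →ₗ[ℂ] Mat d where
  toFun := psiFun d
  map_add' c₁ c₂ := by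
    funext pq qq
    simp only [psiFun, Matrix.add_apply, Pi.add_apply]
    split_ifs <;> simp
  map_smul' a c := by
    funext pq qq
    simp only [psiFun, Matrix.smul_apply, Pi.smul_apply, RingHom.id_apply, smul_eq_mul]
    split_ifs <;> simp

variable (d) in
noncomputable def centEquiv :
    Par d ≃ₗ[ℂ] LinearMap.ker
      (LinearMap.mulLeft ℂ (jordanMatrix d) - LinearMap.mulRight ℂ (jordanMatrix d)) := by
  refine LinearEquiv.ofBijective
    (LinearMap.codRestrict _ (psi (d := d)) (fun c => ?_)) ⟨?_, ?_⟩
  · rw [LinearMap.mem_ker, LinearMap.sub_apply, LinearMap.mulLeft_apply,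
      LinearMap.mulRight_apply, sub_eq_zero]
    exact psiFun_comm c
  · rw [injective_iff_map_eq_zero]
    intro c hc
    apply psiFun_inj c
    have := congrArg Subtype.val hc
    exact this
  · rintro ⟨X, hX⟩
    have hX' : jordanMatrix d * X = X * jordanMatrix d := by
      rw [LinearMap.mem_ker, LinearMap.sub_apply, LinearMap.mulLeft_apply,
        LinearMap.mulRight_apply, sub_eq_zero] at hX
      exact hX
    obtain ⟨c, hcx⟩ := psiFun_surj X hX'
    exact ⟨c, Subtype.ext hcx⟩

lemma finrank_ker :
    Module.finrank ℂ (LinearMap.ker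
      (LinearMap.mulLeft ℂ (jordanMatrix d) - LinearMap.mulRight ℂ (jordanMatrix d)))
      = ∑ i, ∑ j, min (d i) (d j) := by
  rw [← (centEquiv d).finrank_eq]
  rw [Module.finrank_pi_fintype]
  congr 1
  funext i
  rw [Module.finrank_pi_fintype]
  congr 1
  funext j
  rw [Module.finrank_fin_fun]

lemma even_aux (n : ℕ) (hsum : ∑ i, d i = n) :
    Even (n ^ 2 - ∑ i, ∑ j, min (d i) (d j)) := by
  classical
  have hmin : ∀ x : Fin N × Fin N, min (d x.1) (d x.2) ≤ d x.1 * d x.2 := by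
    rintro ⟨i, j⟩
    rcases Nat.eq_zero_or_pos (d j) with h | h
    · simp [h]
    · exact le_trans (min_le_left _ _) (Nat.le_mul_of_pos_right _ h)
  have hn2 : n ^ 2 = ∑ x ∈ Finset.univ ×ˢ Finset.univ, d x.1 * d x.2 := by
    rw [← hsum, pow_two, Finset.sum_mul_sum, ← Finset.sum_product']
  have hS : ∑ i, ∑ j, min (d i) (d j)
      = ∑ x ∈ Finset.univ ×ˢ Finset.univ, min (d x.1) (d x.2) :=
    (Finset.sum_product' _ _ _).symm
  rw [hn2, hS, ← Finset.sum_tsub_distrib _ (fun x _ => hmin x)]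
  have hsplit : (Finset.univ ×ˢ Finset.univ : Finset (Fin N × Fin N))
      = Finset.univ.diag ∪ Finset.univ.offDiag := (Finset.diag_union_offDiag _).symm
  rw [hsplit, Finset.sum_union (Finset.disjoint_diag_offDiag _)]
  refine Even.add ?_ ?_
  · rw [Finset.sum_diag]
    refine Finset.even_sum _ fun i _ => ?_
    show Even (d i * d i - min (d i) (d i))
    rw [min_self]
    have h1 : d i * d i - d i = d i * (d i - 1) := by
      rcases Nat.eq_zero_or_pos (d i) with h | h
      · simp [h]
      · obtain ⟨m, hm⟩ : ∃ m, d i = m + 1 := ⟨d i - 1, by omega⟩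
        rw [hm, Nat.succ_sub_one, Nat.mul_succ]
        omega
    rw [h1]
    exact Nat.even_mul_pred_self (d i)
  · have hz : ((∑ x ∈ Finset.univ.offDiag,
        (d x.1 * d x.2 - min (d x.1) (d x.2)) : ℕ) : ZMod 2) = 0 := by
      push_cast
      refine Finset.sum_involution (fun a _ => (a.2, a.1)) ?_ ?_ ?_ ?_
      · intro a _
        have hsym : d a.2 * d a.1 - min (d a.2) (d a.1)
            = d a.1 * d a.2 - min (d a.1) (d a.2) := by rw [mul_comm, min_comm]
        show ((d a.1 * d a.2 - min (d a.1) (d a.2) : ℕ) : ZMod 2)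
          + ((d a.2 * d a.1 - min (d a.2) (d a.1) : ℕ) : ZMod 2) = 0
        rw [hsym, ← two_mul, show (2 : ZMod 2) = 0 from rfl, zero_mul]
      · intro a ha _
        have hne := (Finset.mem_offDiag.mp ha).2.2
        intro hcon
        have h2 : a.2 = a.1 := congrArg Prod.fst hcon
        exact hne h2.symm
      · intro a ha
        have h := Finset.mem_offDiag.mp ha
        exact Finset.mem_offDiag.mpr ⟨h.2.1, h.1, fun hc => h.2.2 hc.symm⟩
      · intro a _
        rfl
    obtain ⟨k, hk⟩ := (ZMod.natCast_eq_zero_iff _ 2).mp hz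
    exact ⟨k, by omega⟩

end JordanAux

/-- The dimension of the conjugation (adjoint) orbit of a nilpotent
matrix `e ∈ gl_n(ℂ)` with Jordan partition `d` equals `n² − ∑_{i,j} min (d i) (d j)`,
and in particular this number is even.  Here, as the orbit is a smooth variety,
its dimension is `n²` minus the dimension of the stabilizer Lie algebra, i.e. of
the centralizer of `e` in `gl_n(ℂ)`. -/
theorem orbit_dim_of_jordan_type
    {N : ℕ} (d : Fin N → ℕ)
    (n : ℕ) (hsum : ∑ i, d i = n)
    (hsorted : ∀ i j : Fin N, i ≤ j → d j ≤ d i)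
    (e : Matrix (Σ i : Fin N, Fin (d i)) (Σ i : Fin N, Fin (d i)) ℂ)
    (he : e = jordanMatrix d)
    (orbitDim : ℕ)
    (horbit : orbitDim = n ^ 2 -
      Module.finrank ℂ
        (LinearMap.ker (LinearMap.mulLeft ℂ e - LinearMap.mulRight ℂ e))) :
    orbitDim = n ^ 2 - ∑ i, ∑ j, min (d i) (d j) ∧ Even orbitDim := by
  subst he
  rw [JordanAux.finrank_ker] at horbit
  exact ⟨horbit, horbit ▸ JordanAux.even_aux n hsum⟩
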